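/- If the adaptive directional subdivision scheme with masks a₀, a₁ converges in C(ℝ²), then for every ε = (ε₁,ε₂,…) ∈ E_∞ the limit functions satisfy the refinement equation f_ε = Σ_{α∈ℤ²} a_{ε₁}(α) · f_{ε̂}(W_{ε₁} · − α), where ε̂ := (ε₂,ε₃,…) is the shifted sequence. -/

import Mathlib

/-- Bi-infinite two-dimensional integer index set `ℤ²`. -/
abbrev Z2 : Type := Fin 2 → ℤ

/-- The scaling matrix `W₀` with rows `(4,0)` and `(0,2)`. -/
def W0 : Matrix (Fin 2) (Fin 2) ℤ := !![4, 0; 0, 2]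

/-- The scaling matrix `W₁` with rows `(4,-4)` and `(0,2)`. -/
def W1 : Matrix (Fin 2) (Fin 2) ℤ := !![4, -4; 0, 2]

/-- `W_η` for `η ∈ {0,1}`. -/
def Wsel : Fin 2 → Matrix (Fin 2) (Fin 2) ℤ := ![W0, W1]

/-- A sequence `c : ℤ² → ℝ` is bounded. -/
def Bdd (c : Z2 → ℝ) : Prop := ∃ K : ℝ, ∀ α, |c α| ≤ K

/-- The subdivision operator `S_{a,W} c = Σ_α a(· − Wα) c(α)`. -/
noncomputable def subd (a : Z2 → ℝ) (W : Matrix (Fin 2) (Fin 2) ℤ) (c : Z2 → ℝ) : Z2 → ℝ :=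
  fun β => ∑' α : Z2, a (β - W.mulVec α) * c α

/-- The Dirac sequence `δ` on `ℤ²`. -/
noncomputable def delta : Z2 → ℝ := fun α => if α = 0 then 1 else 0

/-- The iterated scheme `S_ε = S_{ε_n} ⋯ S_{ε_1}` applied to `c`, for
`ε = [ε₁, …, ε_n]` (the head `ε₁` is applied first). -/
noncomputable def Ssub (a : Fin 2 → Z2 → ℝ) : List (Fin 2) → (Z2 → ℝ) → (Z2 → ℝ)
  | [], c => c
  | η :: rest, c => Ssub a rest (subd (a η) (Wsel η) c)

/-- `W_ε = W_{ε_n} ⋯ W_{ε_1}` for `ε = [ε₁, …, ε_n]`. -/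
def WprodL : List (Fin 2) → Matrix (Fin 2) (Fin 2) ℤ
  | [] => 1
  | η :: rest => WprodL rest * Wsel η

/-- `W_ε` viewed as a real matrix. -/
noncomputable def WR (ε : List (Fin 2)) : Matrix (Fin 2) (Fin 2) ℝ :=
  (WprodL ε).map (Int.cast : ℤ → ℝ)

/-- The initial segment `P_n ε = (ε₁, …, ε_n)` of `ε ∈ E_∞ = {0,1}^ℕ`. -/
def Pn (ε : ℕ → Fin 2) (n : ℕ) : List (Fin 2) := List.ofFn (fun i : Fin n => ε i)

/-- Cast of an integer vector to `ℝ²`. -/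
noncomputable def castV (α : Z2) : Fin 2 → ℝ := fun i => (α i : ℝ)

/-- The adaptive directional subdivision scheme with masks `a₀, a₁` converges in
`C(ℝ²)`: for every `ε ∈ E_∞` there is a nonzero, uniformly continuous `f_ε`
with `lim_{n→∞} sup_{α∈ℤ²} |f_ε(W_{P_nε}⁻¹ α) − S_{P_nε} δ (α)| = 0`. -/
def SchemeConverges (a : Fin 2 → Z2 → ℝ) : Prop :=
  ∀ ε : ℕ → Fin 2, ∃ f : (Fin 2 → ℝ) → ℝ, f ≠ 0 ∧ UniformContinuous f ∧
    ∀ η : ℝ, 0 < η → ∃ N : ℕ, ∀ n ≥ N, ∀ α : Z2,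
      |f ((WR (Pn ε n))⁻¹.mulVec (castV α)) - Ssub a (Pn ε n) delta α| < η

open Function Matrix

lemma subd_eq_sum (a : Z2 → ℝ) (W : Matrix (Fin 2) (Fin 2) ℤ) (c : Z2 → ℝ)
    (F : Finset Z2) (hc : ∀ γ ∉ F, c γ = 0) (β : Z2) :
    subd a W c β = ∑ γ ∈ F, a (β - W.mulVec γ) * c γ :=
  tsum_eq_sum fun γ hγ => by rw [hc γ hγ, mul_zero]

lemma subd_support {a c : Z2 → ℝ} (ha : (support a).Finite) (hc : (support c).Finite)
    (W : Matrix (Fin 2) (Fin 2) ℤ) : (support (subd a W c)).Finite := by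
  apply Set.Finite.subset (Set.Finite.biUnion hc (fun γ _ => (ha.image (· + W.mulVec γ))))
  intro β hβ
  by_contra h
  apply hβ
  have hz : ∀ γ : Z2, a (β - W.mulVec γ) * c γ = 0 := by
    intro γ
    by_cases hγ : c γ = 0
    · rw [hγ, mul_zero]
    · have haz : a (β - W.mulVec γ) = 0 := by
        by_contra ha'
        exact h (Set.mem_biUnion hγ ⟨β - W.mulVec γ, ha', by simp only [sub_add_cancel]⟩)
      rw [haz, zero_mul]
  have : subd a W c β = ∑' γ : Z2, (0:ℝ) := tsum_congr hz
  simpa using this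

lemma subd_smul (a : Z2 → ℝ) (W : Matrix (Fin 2) (Fin 2) ℤ) (c : Z2 → ℝ) (k : ℝ) (β : Z2) :
    subd a W (fun γ => k * c γ) β = k * subd a W c β := by
  unfold subd
  rw [← tsum_mul_left]
  exact tsum_congr fun γ => by ring

lemma subd_finsum {ι : Type*} (a : Z2 → ℝ) (W : Matrix (Fin 2) (Fin 2) ℤ)
    (F : Finset ι) (g : ι → Z2 → ℝ) (hg : ∀ i ∈ F, (support (g i)).Finite) (β : Z2) :
    subd a W (fun γ => ∑ i ∈ F, g i γ) β = ∑ i ∈ F, subd a W (g i) β := by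
  have hU : (⋃ i ∈ F, support (g i)).Finite := Set.Finite.biUnion F.finite_toSet hg
  set T := hU.toFinset with hTdef
  have hT : ∀ i ∈ F, ∀ γ ∉ T, g i γ = 0 := by
    intro i hi γ hγ
    by_contra h
    exact hγ (hU.mem_toFinset.2 (Set.mem_biUnion hi h))
  rw [subd_eq_sum a W _ T (fun γ hγ => Finset.sum_eq_zero fun i hi => hT i hi γ hγ)]
  simp_rw [Finset.mul_sum]
  rw [Finset.sum_comm]
  exact Finset.sum_congr rfl fun i hi => (subd_eq_sum a W (g i) T (hT i hi) β).symm

lemma subd_shift (a : Z2 → ℝ) (W : Matrix (Fin 2) (Fin 2) ℤ) (c : Z2 → ℝ) (α : Z2) :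
    subd a W (fun γ => c (γ - α)) = fun β => subd a W c (β - W.mulVec α) := by
  funext β
  unfold subd
  rw [← Equiv.tsum_eq (Equiv.addRight α)]
  refine tsum_congr fun γ => ?_
  have h1 : β - W.mulVec (γ + α) = β - W.mulVec α - W.mulVec γ := by
    rw [Matrix.mulVec_add]; abel
  simp only [Equiv.coe_addRight, add_sub_cancel_right, h1]

lemma subd_delta (a : Z2 → ℝ) (W : Matrix (Fin 2) (Fin 2) ℤ) : subd a W delta = a := by
  funext β
  unfold subd
  rw [tsum_eq_single 0 (fun γ hγ => by simp [delta, hγ])]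
  simp [delta, Matrix.mulVec_zero]

lemma mask_decomp (A : Z2 → ℝ) (F : Finset Z2) (hF : ∀ γ ∉ F, A γ = 0) :
    A = fun γ => ∑ α ∈ F, A α * delta (γ - α) := by
  funext γ
  have : ∀ α : Z2, A α * delta (γ - α) = if α = γ then A α else 0 := by
    intro α
    simp only [delta, sub_eq_zero]
    by_cases h : α = γ
    · simp [h]
    · have h' : ¬ γ = α := fun hh => h hh.symm
      simp [h, h']
  simp_rw [this, Finset.sum_ite_eq' F γ (fun α => A α)]
  by_cases h : γ ∈ F <;> simp [h, hF γ]

lemma Ssub_support (a : Fin 2 → Z2 → ℝ) (ha : ∀ η, (support (a η)).Finite) :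
    ∀ (L : List (Fin 2)) (c : Z2 → ℝ), (support c).Finite → (support (Ssub a L c)).Finite
  | [], _, hc => hc
  | η :: rest, c, hc =>
      Ssub_support a ha rest _ (subd_support (ha η) hc (Wsel η))

lemma Ssub_smul (a : Fin 2 → Z2 → ℝ) :
    ∀ (L : List (Fin 2)) (c : Z2 → ℝ) (k : ℝ),
      Ssub a L (fun γ => k * c γ) = fun β => k * Ssub a L c β
  | [], c, k => rfl
  | η :: rest, c, k => by
      show Ssub a rest (subd (a η) (Wsel η) fun γ => k * c γ) = _
      rw [show (subd (a η) (Wsel η) fun γ => k * c γ)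
            = fun β => k * subd (a η) (Wsel η) c β from
          funext fun β => subd_smul _ _ _ _ _]
      exact Ssub_smul a rest _ k

lemma Ssub_shift (a : Fin 2 → Z2 → ℝ) :
    ∀ (L : List (Fin 2)) (c : Z2 → ℝ) (α : Z2),
      Ssub a L (fun γ => c (γ - α)) = fun β => Ssub a L c (β - (WprodL L).mulVec α)
  | [], c, α => by
      funext β; simp [Ssub, WprodL, Matrix.one_mulVec]
  | η :: rest, c, α => by
      show Ssub a rest (subd (a η) (Wsel η) fun γ => c (γ - α)) = _
      rw [subd_shift]
      have := Ssub_shift a rest (subd (a η) (Wsel η) c) ((Wsel η).mulVec α)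
      rw [this]
      funext β
      show Ssub a (η :: rest) c (β - (WprodL rest).mulVec ((Wsel η).mulVec α)) = _
      rw [Matrix.mulVec_mulVec]
      rfl

lemma Ssub_finsum (a : Fin 2 → Z2 → ℝ) (ha : ∀ η, (support (a η)).Finite) {ι : Type*} :
    ∀ (L : List (Fin 2)) (F : Finset ι) (g : ι → Z2 → ℝ),
      (∀ i ∈ F, (support (g i)).Finite) →
      Ssub a L (fun γ => ∑ i ∈ F, g i γ) = fun β => ∑ i ∈ F, Ssub a L (g i) β
  | [], F, g, hg => rfl
  | η :: rest, F, g, hg => by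
      show Ssub a rest (subd (a η) (Wsel η) fun γ => ∑ i ∈ F, g i γ) = _
      rw [show (subd (a η) (Wsel η) fun γ => ∑ i ∈ F, g i γ)
            = fun β => ∑ i ∈ F, subd (a η) (Wsel η) (g i) β from
          funext fun β => subd_finsum _ _ _ _ hg β]
      exact Ssub_finsum a ha rest F _
        (fun i hi => subd_support (ha η) (hg i hi) (Wsel η))

lemma key_identity (a : Fin 2 → Z2 → ℝ) (ha : ∀ η, (support (a η)).Finite)
    (b : Fin 2) (L : List (Fin 2)) (β : Z2) :
    Ssub a (b :: L) delta β
      = ∑ α ∈ (ha b).toFinset, a b α * Ssub a L delta (β - (WprodL L).mulVec α) := by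
  show Ssub a L (subd (a b) (Wsel b) delta) β = _
  rw [subd_delta]
  rw [congrArg (fun c => Ssub a L c) (mask_decomp (a b) (ha b).toFinset
      (fun γ hγ => by simpa using fun h => hγ ((ha b).mem_toFinset.2 h)))]
  have hsupp : ∀ α ∈ (ha b).toFinset, (support fun γ => a b α * delta (γ - α)).Finite := by
    intro α _
    apply Set.Finite.subset (Set.finite_singleton α)
    intro γ hγ
    simp only [support, Set.mem_setOf_eq, delta] at hγ
    by_contra h
    apply hγ
    rw [if_neg (sub_ne_zero.2 (by simpa using h)), mul_zero]
  rw [Ssub_finsum a ha L _ _ hsupp]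
  refine Finset.sum_congr rfl fun α _ => ?_
  rw [Ssub_smul a L (fun γ => delta (γ - α)) (a b α), Ssub_shift a L delta α]

lemma Pn_succ (ε : ℕ → Fin 2) (n : ℕ) :
    Pn ε (n + 1) = ε 0 :: Pn (fun m => ε (m + 1)) n := by
  unfold Pn
  rw [List.ofFn_succ]
  congr 1

lemma WR_cons (η : Fin 2) (rest : List (Fin 2)) :
    WR (η :: rest) = WR rest * (Wsel η).map (Int.cast : ℤ → ℝ) := by
  show (WprodL rest * Wsel η).map (Int.cast : ℤ → ℝ) = _
  have h : (Int.cast : ℤ → ℝ) = ⇑(Int.castRingHom ℝ) := rfl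
  rw [h, Matrix.map_mul]
  rfl

lemma det_Wsel_map (η : Fin 2) : ((Wsel η).map (Int.cast : ℤ → ℝ)).det = 8 := by
  fin_cases η <;>
    simp [Wsel, W0, W1, Matrix.det_fin_two, Matrix.map_apply] <;> norm_num

lemma det_WR : ∀ L : List (Fin 2), (WR L).det = 8 ^ L.length
  | [] => by simp [WR, WprodL]
  | η :: rest => by
      rw [WR_cons, Matrix.det_mul, det_Wsel_map, det_WR rest]
      rw [List.length_cons, pow_succ]

lemma isUnit_det_WR (L : List (Fin 2)) : IsUnit (WR L).det := by
  rw [det_WR]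
  exact isUnit_iff_ne_zero.2 (by positivity)

lemma WR_inv_cancel (L : List (Fin 2)) (y : Fin 2 → ℝ) :
    (WR L)⁻¹.mulVec ((WR L).mulVec y) = y := by
  rw [Matrix.mulVec_mulVec, Matrix.nonsing_inv_mul _ (isUnit_det_WR L), Matrix.one_mulVec]

lemma Wsel_map_inv_bound0 (v : Fin 2 → ℝ) :
    ‖((Wsel 0).map (Int.cast : ℤ → ℝ))⁻¹.mulVec v‖ ≤ (3/4) * ‖v‖ := by
  have hv0 : |v 0| ≤ ‖v‖ := by simpa [Real.norm_eq_abs] using norm_le_pi_norm v 0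
  have hv1 : |v 1| ≤ ‖v‖ := by simpa [Real.norm_eq_abs] using norm_le_pi_norm v 1
  have hnn : (0:ℝ) ≤ (3/4) * ‖v‖ := by positivity
  have hinv : ((Wsel 0).map (Int.cast : ℤ → ℝ))⁻¹ = !![(1:ℝ)/4, 0; 0, 1/2] := by
    apply Matrix.inv_eq_right_inv
    ext i j
    fin_cases i <;> fin_cases j <;>
      simp [Wsel, W0, Matrix.mul_apply, Matrix.map_apply, Fin.sum_univ_two] <;> norm_num
  rw [hinv, pi_norm_le_iff_of_nonneg hnn]
  intro i
  fin_cases i <;>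
    · simp [Matrix.mulVec, dotProduct, Fin.sum_univ_two, Real.norm_eq_abs, Matrix.vecHead, Matrix.vecTail]
      first
        | (rw [abs_le]
           constructor <;> nlinarith [abs_le.1 hv0, abs_le.1 hv1, norm_nonneg v])
        | nlinarith [abs_le.1 hv0, abs_le.1 hv1, norm_nonneg v,
            abs_nonneg (v 0), abs_nonneg (v 1)]

lemma Wsel_map_inv_bound1 (v : Fin 2 → ℝ) :
    ‖((Wsel 1).map (Int.cast : ℤ → ℝ))⁻¹.mulVec v‖ ≤ (3/4) * ‖v‖ := by
  have hv0 : |v 0| ≤ ‖v‖ := by simpa [Real.norm_eq_abs] using norm_le_pi_norm v 0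
  have hv1 : |v 1| ≤ ‖v‖ := by simpa [Real.norm_eq_abs] using norm_le_pi_norm v 1
  have hnn : (0:ℝ) ≤ (3/4) * ‖v‖ := by positivity
  have hinv : ((Wsel 1).map (Int.cast : ℤ → ℝ))⁻¹ = !![(1:ℝ)/4, 1/2; 0, 1/2] := by
    apply Matrix.inv_eq_right_inv
    ext i j
    fin_cases i <;> fin_cases j <;>
      simp [Wsel, W1, Matrix.mul_apply, Matrix.map_apply, Fin.sum_univ_two] <;> norm_num
  rw [hinv, pi_norm_le_iff_of_nonneg hnn]
  intro i
  fin_cases i <;>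
    · simp [Matrix.mulVec, dotProduct, Fin.sum_univ_two, Real.norm_eq_abs, Matrix.vecHead, Matrix.vecTail]
      first
        | (rw [abs_le]
           constructor <;> nlinarith [abs_le.1 hv0, abs_le.1 hv1, norm_nonneg v])
        | nlinarith [abs_le.1 hv0, abs_le.1 hv1, norm_nonneg v,
            abs_nonneg (v 0), abs_nonneg (v 1)]

lemma Wsel_map_inv_bound (η : Fin 2) (v : Fin 2 → ℝ) :
    ‖((Wsel η).map (Int.cast : ℤ → ℝ))⁻¹.mulVec v‖ ≤ (3/4) * ‖v‖ := by
  fin_cases η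
  · exact Wsel_map_inv_bound0 v
  · exact Wsel_map_inv_bound1 v

lemma WR_inv_bound : ∀ (L : List (Fin 2)) (v : Fin 2 → ℝ),
    ‖(WR L)⁻¹.mulVec v‖ ≤ (3/4 : ℝ) ^ L.length * ‖v‖
  | [], v => by simp [WR, WprodL, Matrix.one_mulVec]
  | η :: rest, v => by
      rw [WR_cons, Matrix.mul_inv_rev, ← Matrix.mulVec_mulVec]
      calc ‖((Wsel η).map (Int.cast : ℤ → ℝ))⁻¹.mulVec ((WR rest)⁻¹.mulVec v)‖
          ≤ (3/4) * ‖(WR rest)⁻¹.mulVec v‖ := Wsel_map_inv_bound η _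
        _ ≤ (3/4) * ((3/4 : ℝ) ^ rest.length * ‖v‖) := by
            have := WR_inv_bound rest v
            nlinarith [norm_nonneg ((WR rest)⁻¹.mulVec v)]
        _ = (3/4 : ℝ) ^ (η :: rest).length * ‖v‖ := by
            rw [List.length_cons, pow_succ]; ring

lemma castV_sub (α β : Z2) : castV (α - β) = castV α - castV β := by
  funext i; simp [castV]

lemma castV_mulVec (M : Matrix (Fin 2) (Fin 2) ℤ) (α : Z2) :
    castV (M.mulVec α) = (M.map (Int.cast : ℤ → ℝ)).mulVec (castV α) := by
  funext i
  simp [castV, Matrix.mulVec, dotProduct, Matrix.map_apply]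

lemma Pn_length (ε : ℕ → Fin 2) (n : ℕ) : (Pn ε n).length = n := List.length_ofFn

open Filter

/-- If the adaptive directional subdivision scheme converges, with limit functions
`f_ε` for `ε ∈ E_∞`, then the limit functions satisfy the refinement equation
`f_ε = Σ_α a_{ε₁}(α) f_{ε̂}(W_{ε₁}· − α)` where `ε̂ = (ε₂, ε₃, …)`. -/
theorem stmt9 (a : Fin 2 → Z2 → ℝ) (ha : ∀ η, (Function.support (a η)).Finite)
    (f : (ℕ → Fin 2) → (Fin 2 → ℝ) → ℝ)
    (hf : ∀ ε : ℕ → Fin 2, f ε ≠ 0 ∧ UniformContinuous (f ε) ∧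
      ∀ η : ℝ, 0 < η → ∃ N : ℕ, ∀ n ≥ N, ∀ α : Z2,
        |f ε ((WR (Pn ε n))⁻¹.mulVec (castV α)) - Ssub a (Pn ε n) delta α| < η) :
    ∀ ε : ℕ → Fin 2, ∀ x : Fin 2 → ℝ,
      f ε x = ∑' α : Z2, a (ε 0) α *
        f (fun n => ε (n + 1)) (((Wsel (ε 0)).map (Int.cast : ℤ → ℝ)).mulVec x - castV α) := by

  intro ε x
  obtain ⟨-, hcont, hlim⟩ := hf ε
  obtain ⟨-, hcont', hlim'⟩ := hf (fun n => ε (n + 1))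
  set ε' : ℕ → Fin 2 := fun n => ε (n + 1) with hε'def
  set b : Fin 2 := ε 0 with hbdef
  set F : Finset Z2 := (ha b).toFinset with hFdef
  set VR : Matrix (Fin 2) (Fin 2) ℝ := (Wsel b).map (Int.cast : ℤ → ℝ) with hVRdef
  have htsum : ∑' α : Z2, a b α * f ε' (VR.mulVec x - castV α)
      = ∑ α ∈ F, a b α * f ε' (VR.mulVec x - castV α) := by
    refine tsum_eq_sum fun α hα => ?_
    have hz : a b α = 0 := by
      by_contra h; exact hα (by rw [hFdef]; exact (ha b).mem_toFinset.2 h)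
    rw [hz, zero_mul]
  rw [htsum]
  -- integer approximation points
  set β : ℕ → Z2 := fun n => fun i => round (((WR (Pn ε (n+1))).mulVec x) i) with hβdef
  have hPn : ∀ n, Pn ε (n+1) = b :: Pn ε' n := fun n => Pn_succ ε n
  have hWsplit : ∀ n, WR (Pn ε (n+1)) = WR (Pn ε' n) * VR := by
    intro n; rw [hPn n, WR_cons]
  have hβ_close : ∀ n, ‖castV (β n) - (WR (Pn ε (n+1))).mulVec x‖ ≤ 1 := by
    intro n
    rw [pi_norm_le_iff_of_nonneg zero_le_one]
    intro i
    have h2 := abs_sub_round ((WR (Pn ε (n+1))).mulVec x i)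
    simp only [castV, hβdef, Pi.sub_apply, Real.norm_eq_abs]
    rw [abs_sub_comm]
    linarith
  have hgeo : Tendsto (fun n : ℕ => (3/4 : ℝ) ^ n) atTop (nhds 0) :=
    tendsto_pow_atTop_nhds_zero_of_lt_one (by norm_num) (by norm_num)
  -- convergence of the scaled integer points to x
  have hu : Tendsto (fun n => (WR (Pn ε (n+1)))⁻¹.mulVec (castV (β n))) atTop (nhds x) := by
    rw [tendsto_iff_norm_sub_tendsto_zero]
    refine squeeze_zero (fun n => norm_nonneg _) (g := fun n => (3/4:ℝ)^(n+1)) ?_ ?_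
    · intro n
      have h1 : (WR (Pn ε (n+1)))⁻¹.mulVec (castV (β n)) - x
          = (WR (Pn ε (n+1)))⁻¹.mulVec (castV (β n) - (WR (Pn ε (n+1))).mulVec x) := by
        rw [Matrix.mulVec_sub, WR_inv_cancel]
      rw [h1]
      calc ‖(WR (Pn ε (n+1)))⁻¹.mulVec (castV (β n) - (WR (Pn ε (n+1))).mulVec x)‖
          ≤ (3/4:ℝ)^(Pn ε (n+1)).length * ‖castV (β n) - (WR (Pn ε (n+1))).mulVec x‖ :=
            WR_inv_bound _ _
        _ ≤ (3/4:ℝ)^(n+1) * 1 := by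
            rw [Pn_length]
            exact mul_le_mul_of_nonneg_left (hβ_close n) (by positivity)
        _ = (3/4:ℝ)^(n+1) := mul_one _
    · exact hgeo.comp (Filter.tendsto_add_atTop_nat 1)
  have hfu : Tendsto (fun n => f ε ((WR (Pn ε (n+1)))⁻¹.mulVec (castV (β n)))) atTop
      (nhds (f ε x)) := (hcont.continuous.tendsto x).comp hu
  have hdiff : Tendsto (fun n => f ε ((WR (Pn ε (n+1)))⁻¹.mulVec (castV (β n)))
      - Ssub a (Pn ε (n+1)) delta (β n)) atTop (nhds 0) := by
    rw [Metric.tendsto_atTop]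
    intro η hη
    obtain ⟨N, hN⟩ := hlim η hη
    exact ⟨N, fun n hn => by
      simpa [Real.dist_eq, sub_zero] using hN (n+1) (hn.trans (Nat.le_succ n)) (β n)⟩
  have hA : Tendsto (fun n => Ssub a (Pn ε (n+1)) delta (β n)) atTop (nhds (f ε x)) := by
    have h := hfu.sub hdiff
    simp only [sub_sub_cancel, sub_zero] at h
    exact h
  -- per-term convergence
  have hterm : ∀ α ∈ F, Tendsto
      (fun n => Ssub a (Pn ε' n) delta (β n - (WprodL (Pn ε' n)).mulVec α))
      atTop (nhds (f ε' (VR.mulVec x - castV α))) := by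
    intro α _
    set w : ℕ → (Fin 2 → ℝ) :=
      fun n => (WR (Pn ε' n))⁻¹.mulVec (castV (β n - (WprodL (Pn ε' n)).mulVec α)) with hwdef
    have hw_eq : ∀ n, w n = (WR (Pn ε' n))⁻¹.mulVec (castV (β n)) - castV α := by
      intro n
      rw [hwdef]
      simp only
      rw [castV_sub, castV_mulVec, Matrix.mulVec_sub]
      congr 1
      exact WR_inv_cancel _ _
    have hw : Tendsto w atTop (nhds (VR.mulVec x - castV α)) := by
      rw [tendsto_iff_norm_sub_tendsto_zero]
      refine squeeze_zero (fun n => norm_nonneg _) (g := fun n => (3/4:ℝ)^n) ?_ hgeo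
      intro n
      have h1 : w n - (VR.mulVec x - castV α)
          = (WR (Pn ε' n))⁻¹.mulVec (castV (β n) - (WR (Pn ε (n+1))).mulVec x) := by
        rw [hw_eq n, Matrix.mulVec_sub, hWsplit n, ← Matrix.mulVec_mulVec, WR_inv_cancel]
        abel
      rw [h1]
      calc ‖(WR (Pn ε' n))⁻¹.mulVec (castV (β n) - (WR (Pn ε (n+1))).mulVec x)‖
          ≤ (3/4:ℝ)^(Pn ε' n).length * ‖castV (β n) - (WR (Pn ε (n+1))).mulVec x‖ :=
            WR_inv_bound _ _
        _ ≤ (3/4:ℝ)^n * 1 := by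
            rw [Pn_length]
            exact mul_le_mul_of_nonneg_left (hβ_close n) (by positivity)
        _ = (3/4:ℝ)^n := mul_one _
    have hfw : Tendsto (fun n => f ε' (w n)) atTop (nhds (f ε' (VR.mulVec x - castV α))) :=
      (hcont'.continuous.tendsto _).comp hw
    have hdiff' : Tendsto (fun n => f ε' (w n)
        - Ssub a (Pn ε' n) delta (β n - (WprodL (Pn ε' n)).mulVec α)) atTop (nhds 0) := by
      rw [Metric.tendsto_atTop]
      intro η hη
      obtain ⟨N, hN⟩ := hlim' η hη
      exact ⟨N, fun n hn => by
        simpa [Real.dist_eq, sub_zero, hwdef] using hN n hn (β n - (WprodL (Pn ε' n)).mulVec α)⟩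
    have h := hfw.sub hdiff'
    simp only [sub_sub_cancel, sub_zero] at h
    exact h
  have hsum : Tendsto
      (fun n => ∑ α ∈ F, a b α * Ssub a (Pn ε' n) delta (β n - (WprodL (Pn ε' n)).mulVec α))
      atTop (nhds (∑ α ∈ F, a b α * f ε' (VR.mulVec x - castV α))) :=
    tendsto_finset_sum F (fun α hα => (hterm α hα).const_mul (a b α))
  have hEq : ∀ n, Ssub a (Pn ε (n+1)) delta (β n)
      = ∑ α ∈ F, a b α * Ssub a (Pn ε' n) delta (β n - (WprodL (Pn ε' n)).mulVec α) := by
    intro n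
    rw [hPn n, hFdef]
    exact key_identity a ha b (Pn ε' n) (β n)
  exact tendsto_nhds_unique (hA.congr hEq) hsum
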